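/- The automorphism group of And(k) has order 2(3k−1). -/

import Mathlib

/-- The connection set of the Andrásfai graph: residues ≡ 1 (mod 3) in Z_{3k-1}. -/
def andrasfaiSet (k : ℕ) : Set (ZMod (3 * k - 1)) :=
  {x | ∃ t < k, x = ((3 * t + 1 : ℕ) : ZMod (3 * k - 1))}

/-- The Andrásfai graph And(k) = Cay(Z_{3k-1}; C). -/
def andrasfai (k : ℕ) : SimpleGraph (ZMod (3 * k - 1)) :=
  SimpleGraph.fromRel (fun g h => h - g ∈ andrasfaiSet k)

open Finset

namespace AndrasfaiAux

variable (k : ℕ)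

lemma nz (hk : 2 ≤ k) : NeZero (3 * k - 1) := ⟨by omega⟩

lemma sub_val (hk : 2 ≤ k) (a b : ZMod (3 * k - 1)) :
    (a - b).val = if b.val ≤ a.val then a.val - b.val else a.val + (3 * k - 1) - b.val := by
  haveI := nz k hk
  have ha := ZMod.val_lt a
  have hb := ZMod.val_lt b
  have h1 : a - b = ((a.val + ((3 * k - 1) - b.val) : ℕ) : ZMod (3 * k - 1)) := by
    push_cast [Nat.cast_sub hb.le]
    rw [ZMod.natCast_zmod_val, ZMod.natCast_zmod_val, ZMod.natCast_self]
    ring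
  rw [h1, ZMod.val_natCast]
  split_ifs with h
  · rw [show a.val + ((3 * k - 1) - b.val) = (a.val - b.val) + (3 * k - 1) by omega,
      Nat.add_mod_right, Nat.mod_eq_of_lt (by omega)]
  · rw [Nat.mod_eq_of_lt (by omega)]
    omega

lemma cast_val (hk : 2 ≤ k) (m : ℕ) (hm : m < 3 * k - 1) :
    ((m : ℕ) : ZMod (3 * k - 1)).val = m := by
  haveI := nz k hk
  rw [ZMod.val_natCast, Nat.mod_eq_of_lt hm]

lemma mem_iff (hk : 2 ≤ k) (x : ZMod (3 * k - 1)) :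
    x ∈ andrasfaiSet k ↔ x.val % 3 = 1 := by
  haveI := nz k hk
  constructor
  · rintro ⟨t, ht, rfl⟩
    rw [cast_val k hk _ (show 3 * t + 1 < 3 * k - 1 by omega)]
    omega
  · intro h
    refine ⟨x.val / 3, ?_, ?_⟩
    · have := ZMod.val_lt x; omega
    · rw [show 3 * (x.val / 3) + 1 = x.val by omega, ZMod.natCast_zmod_val]

lemma adj_iff (hk : 2 ≤ k) (x y : ZMod (3 * k - 1)) :
    (andrasfai k).Adj x y ↔ (y - x).val % 3 = 1 := by
  haveI := nz k hk
  rw [andrasfai, SimpleGraph.fromRel_adj, mem_iff k hk, mem_iff k hk]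
  constructor
  · rintro ⟨hne, h | h⟩
    · exact h
    · have hne' : x - y ≠ 0 := fun h0 => hne (by
        have := sub_eq_zero.mp h0; exact this)
      have h2 : y - x = -(x - y) := by ring
      have h3 := ZMod.val_lt (x - y)
      have h4 : (x - y).val ≠ 0 := fun h0 => hne' ((ZMod.val_eq_zero _).mp h0)
      rw [h2, ZMod.neg_val, if_neg hne']
      omega
  · intro h
    have hne : x ≠ y := by
      rintro rfl
      rw [sub_self] at h
      simp [ZMod.val_zero] at h
    exact ⟨hne, Or.inl h⟩

lemma neg_mod3 (hk : 2 ≤ k) (v : ZMod (3 * k - 1)) :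
    (-v).val % 3 = 1 ↔ v.val % 3 = 1 := by
  haveI := nz k hk
  by_cases h0 : v = 0
  · subst h0; rw [neg_zero]
  · have h1 := ZMod.val_lt v
    have h2 : v.val ≠ 0 := fun h => h0 ((ZMod.val_eq_zero _).mp h)
    rw [ZMod.neg_val, if_neg h0]
    omega

/-- The candidate automorphisms: x ↦ ±x + b. -/
def phi (hk : 2 ≤ k) (b : ZMod (3 * k - 1)) (s : Bool) : andrasfai k ≃g andrasfai k where
  toEquiv := ((cond s (Equiv.neg (ZMod (3 * k - 1))) (Equiv.refl _)).trans
    (Equiv.addRight b))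
  map_rel_iff' := by
    intro x y
    cases s
    · simp only [cond_false, Equiv.trans_apply, Equiv.refl_apply, Equiv.coe_addRight]
      rw [adj_iff k hk, adj_iff k hk, show (y + b) - (x + b) = y - x by ring]
    · simp only [cond_true, Equiv.trans_apply, Equiv.neg_apply, Equiv.coe_addRight]
      rw [adj_iff k hk, adj_iff k hk, show (-y + b) - (-x + b) = -(y - x) by ring,
        neg_mod3 k hk]

lemma phi_apply (hk : 2 ≤ k) (b : ZMod (3 * k - 1)) (s : Bool) (x : ZMod (3 * k - 1)) :
    phi k hk b s x = (cond s (-x) x) + b := by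
  cases s <;> rfl

lemma symm_zero (e : andrasfai k ≃g andrasfai k) (he : e 0 = 0) : e.symm 0 = 0 := by
  conv_lhs => rw [← he]
  exact e.symm_apply_apply 0

lemma eq_cast_iff (hk : 2 ≤ k) (c : ZMod (3 * k - 1)) (m : ℕ) (hm : m < 3 * k - 1) :
    c = ((m : ℕ) : ZMod (3 * k - 1)) ↔ c.val = m := by
  haveI := nz k hk
  constructor
  · rintro rfl; rw [ZMod.val_natCast, Nat.mod_eq_of_lt hm]
  · rintro h; rw [← h, ZMod.natCast_zmod_val]

lemma neg_cast_val (hk : 2 ≤ k) (m : ℕ) (hm1 : 1 ≤ m) (hm : m < 3 * k - 1) :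
    (-((m : ℕ) : ZMod (3 * k - 1))).val = 3 * k - 1 - m := by
  haveI := nz k hk
  have h1 := cast_val k hk m hm
  have hne : ((m : ℕ) : ZMod (3 * k - 1)) ≠ 0 := by
    intro h; rw [h, ZMod.val_zero] at h1; omega
  rw [ZMod.neg_val, if_neg hne, h1]

open scoped Classical in
/-- Number of common neighbours of `0` and `v`. -/
noncomputable def cn [NeZero (3 * k - 1)] (v : ZMod (3 * k - 1)) : ℕ :=
  (Finset.univ.filter fun c => (andrasfai k).Adj 0 c ∧ (andrasfai k).Adj v c).card

lemma cn_invariant (hk : 2 ≤ k) [NeZero (3 * k - 1)] (e : andrasfai k ≃g andrasfai k)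
    (he : e 0 = 0) (v : ZMod (3 * k - 1)) : cn k (e v) = cn k v := by
  classical
  unfold cn
  refine Finset.card_nbij' (fun c => e.symm c) (fun c => e c) ?_ ?_ ?_ ?_
  · intro c hc
    simp only [Finset.mem_coe, Finset.mem_filter, Finset.mem_univ, true_and] at hc ⊢
    constructor
    · have h := e.map_rel_iff (a := (0 : ZMod (3 * k - 1))) (b := e.symm c)
      rw [he, e.apply_symm_apply] at h
      exact h.mp hc.1
    · have h := e.map_rel_iff (a := v) (b := e.symm c)
      rw [e.apply_symm_apply] at h
      exact h.mp hc.2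
  · intro c hc
    simp only [Finset.mem_coe, Finset.mem_filter, Finset.mem_univ, true_and] at hc ⊢
    constructor
    · have h := e.map_rel_iff (a := (0 : ZMod (3 * k - 1))) (b := c)
      rw [he] at h
      exact h.mpr hc.1
    · exact (e.map_rel_iff (a := v) (b := c)).mpr hc.2
  · intro c _; simpa using e.apply_symm_apply c
  · intro c _; simpa using e.symm_apply_apply c

lemma mem_cnset0 (hk : 2 ≤ k) (j : ℕ) (hj1 : 1 ≤ j) (hj2 : j ≤ k - 1)
    (c : ZMod (3 * k - 1)) :
    ((andrasfai k).Adj 0 c ∧ (andrasfai k).Adj ((3 * j : ℕ) : ZMod (3 * k - 1)) c) ↔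
      (c.val % 3 = 1 ∧ 3 * j < c.val) := by
  haveI := nz k hk
  have hc := ZMod.val_lt c
  rw [adj_iff k hk, adj_iff k hk, sub_zero, sub_val k hk, cast_val k hk _ (by omega)]
  split_ifs <;> omega

lemma mem_cnset2 (hk : 2 ≤ k) (j : ℕ) (hj1 : 1 ≤ j) (hj2 : j ≤ k - 1)
    (c : ZMod (3 * k - 1)) :
    ((andrasfai k).Adj 0 c ∧ (andrasfai k).Adj (-((3 * j : ℕ) : ZMod (3 * k - 1))) c) ↔
      (c.val % 3 = 1 ∧ c.val + 3 * j < 3 * k - 1) := by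
  haveI := nz k hk
  have hc := ZMod.val_lt c
  rw [adj_iff k hk, adj_iff k hk, sub_zero, sub_val k hk,
    neg_cast_val k hk _ (by omega) (by omega)]
  split_ifs <;> omega

lemma cn_type0 (hk : 2 ≤ k) [NeZero (3 * k - 1)] (j : ℕ) (hj1 : 1 ≤ j) (hj2 : j ≤ k - 1) :
    cn k ((3 * j : ℕ) : ZMod (3 * k - 1)) = k - j := by
  classical
  unfold cn
  rw [Finset.filter_congr (fun c _ => mem_cnset0 k hk j hj1 hj2 c)]
  have himg : (Finset.univ.filter fun c : ZMod (3 * k - 1) =>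
      c.val % 3 = 1 ∧ 3 * j < c.val) =
      (Finset.range (k - j)).image (fun t => ((3 * (j + t) + 1 : ℕ) : ZMod (3 * k - 1))) := by
    ext c
    simp only [Finset.mem_filter, Finset.mem_image, Finset.mem_range, Finset.mem_univ, true_and]
    constructor
    · rintro ⟨h1, h2⟩
      have hc := ZMod.val_lt c
      refine ⟨(c.val - 1) / 3 - j, by omega, ?_⟩
      rw [eq_comm, eq_cast_iff k hk _ _ (by omega)]
      omega
    · rintro ⟨t, ht, rfl⟩
      rw [cast_val k hk _ (by omega)]
      omega
  rw [himg, Finset.card_image_of_injOn, Finset.card_range]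
  intro a ha b hb hab
  simp only [Finset.coe_range, Set.mem_Iio] at ha hb
  have h1 := cast_val k hk (3 * (j + a) + 1) (by omega)
  have h2 := cast_val k hk (3 * (j + b) + 1) (by omega)
  have hab' : ((3 * (j + a) + 1 : ℕ) : ZMod (3 * k - 1)) =
      ((3 * (j + b) + 1 : ℕ) : ZMod (3 * k - 1)) := hab
  rw [hab'] at h1
  omega

lemma cn_type2 (hk : 2 ≤ k) [NeZero (3 * k - 1)] (j : ℕ) (hj1 : 1 ≤ j) (hj2 : j ≤ k - 1) :
    cn k (-((3 * j : ℕ) : ZMod (3 * k - 1))) = k - j := by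
  classical
  unfold cn
  rw [Finset.filter_congr (fun c _ => mem_cnset2 k hk j hj1 hj2 c)]
  have himg : (Finset.univ.filter fun c : ZMod (3 * k - 1) =>
      c.val % 3 = 1 ∧ c.val + 3 * j < 3 * k - 1) =
      (Finset.range (k - j)).image (fun t => ((3 * t + 1 : ℕ) : ZMod (3 * k - 1))) := by
    ext c
    simp only [Finset.mem_filter, Finset.mem_image, Finset.mem_range, Finset.mem_univ, true_and]
    constructor
    · rintro ⟨h1, h2⟩
      have hc := ZMod.val_lt c
      refine ⟨(c.val - 1) / 3, by omega, ?_⟩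
      rw [eq_comm, eq_cast_iff k hk _ _ (by omega)]
      omega
    · rintro ⟨t, ht, rfl⟩
      rw [cast_val k hk _ (by omega)]
      omega
  rw [himg, Finset.card_image_of_injOn, Finset.card_range]
  intro a ha b hb hab
  simp only [Finset.coe_range, Set.mem_Iio] at ha hb
  have h1 := cast_val k hk (3 * a + 1) (by omega)
  have h2 := cast_val k hk (3 * b + 1) (by omega)
  have hab' : ((3 * a + 1 : ℕ) : ZMod (3 * k - 1)) =
      ((3 * b + 1 : ℕ) : ZMod (3 * k - 1)) := hab
  rw [hab'] at h1
  omega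

lemma NN_form (hk : 2 ≤ k) (v : ZMod (3 * k - 1)) (h0 : v ≠ 0) (h1 : v.val % 3 ≠ 1) :
    ∃ j, 1 ≤ j ∧ j ≤ k - 1 ∧
      (v = ((3 * j : ℕ) : ZMod (3 * k - 1)) ∨ v = -((3 * j : ℕ) : ZMod (3 * k - 1))) := by
  haveI := nz k hk
  have hv := ZMod.val_lt v
  have hv0 : v.val ≠ 0 := fun h => h0 ((ZMod.val_eq_zero _).mp h)
  have h3 : v.val % 3 = 0 ∨ v.val % 3 = 2 := by omega
  rcases h3 with h | h
  · refine ⟨v.val / 3, by omega, by omega, Or.inl ?_⟩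
    rw [eq_cast_iff k hk _ _ (by omega)]
    omega
  · refine ⟨(3 * k - 1 - v.val) / 3, by omega, by omega, Or.inr ?_⟩
    rw [← neg_eq_iff_eq_neg, eq_cast_iff k hk _ _ (by omega)]
    rw [ZMod.neg_val, if_neg h0]
    omega

lemma ne_neg (hk : 2 ≤ k) (j : ℕ) (hj1 : 1 ≤ j) (hj2 : j ≤ k - 1) :
    ((3 * j : ℕ) : ZMod (3 * k - 1)) ≠ -((3 * j : ℕ) : ZMod (3 * k - 1)) := by
  haveI := nz k hk
  intro h
  have h1 := cast_val k hk (3 * j) (by omega)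
  have h2 := neg_cast_val k hk (3 * j) (by omega) (by omega)
  rw [← h, h1] at h2
  omega

lemma not_adj_aa (hk : 2 ≤ k) (i j : ℕ) (hi1 : 1 ≤ i) (hi2 : i ≤ k - 1)
    (hj1 : 1 ≤ j) (hj2 : j ≤ k - 1) :
    ¬ (andrasfai k).Adj ((3 * i : ℕ) : ZMod (3 * k - 1)) ((3 * j : ℕ) : ZMod (3 * k - 1)) := by
  haveI := nz k hk
  rw [adj_iff k hk, sub_val k hk, cast_val k hk _ (by omega), cast_val k hk _ (by omega)]
  split_ifs <;> omega

lemma not_adj_bb (hk : 2 ≤ k) (i j : ℕ) (hi1 : 1 ≤ i) (hi2 : i ≤ k - 1)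
    (hj1 : 1 ≤ j) (hj2 : j ≤ k - 1) :
    ¬ (andrasfai k).Adj (-((3 * i : ℕ) : ZMod (3 * k - 1)))
      (-((3 * j : ℕ) : ZMod (3 * k - 1))) := by
  haveI := nz k hk
  rw [adj_iff k hk, sub_val k hk, neg_cast_val k hk _ (by omega) (by omega),
    neg_cast_val k hk _ (by omega) (by omega)]
  split_ifs <;> omega

lemma adj_ab (hk : 2 ≤ k) (i j : ℕ) (hi1 : 1 ≤ i) (hi2 : i ≤ k - 1)
    (hj1 : 1 ≤ j) (hj2 : j ≤ k - 1) :
    (andrasfai k).Adj ((3 * j : ℕ) : ZMod (3 * k - 1)) (-((3 * i : ℕ) : ZMod (3 * k - 1))) ↔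
      k ≤ i + j := by
  haveI := nz k hk
  rw [adj_iff k hk, sub_val k hk, neg_cast_val k hk _ (by omega) (by omega),
    cast_val k hk _ (by omega)]
  split_ifs <;> omega

section KeyLemma

lemma e_zero_iff (e : andrasfai k ≃g andrasfai k) (he : e 0 = 0) (v : ZMod (3 * k - 1)) :
    e v = 0 ↔ v = 0 := by
  constructor
  · intro h
    exact e.injective (h.trans he.symm)
  · rintro rfl; exact he

lemma e_class1 (hk : 2 ≤ k) (e : andrasfai k ≃g andrasfai k) (he : e 0 = 0) (v : ZMod (3 * k - 1)) :
    (e v).val % 3 = 1 ↔ v.val % 3 = 1 := by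
  have h := e.map_rel_iff (a := (0 : ZMod (3 * k - 1))) (b := v)
  rw [he, adj_iff k hk, adj_iff k hk, sub_zero, sub_zero] at h
  exact h

lemma e_pm (hk : 2 ≤ k) (e : andrasfai k ≃g andrasfai k) (he : e 0 = 0) (v : ZMod (3 * k - 1)) (h0 : v ≠ 0) (h1 : v.val % 3 ≠ 1) :
    e v = v ∨ e v = -v := by
  haveI := nz k hk
  obtain ⟨j, hj1, hj2, hv⟩ := NN_form k hk v h0 h1
  have h0' : e v ≠ 0 := fun h => h0 ((e_zero_iff k e he v).mp h)
  have h1' : (e v).val % 3 ≠ 1 := fun h => h1 ((e_class1 k hk e he v).mp h)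
  obtain ⟨j', hj1', hj2', hv'⟩ := NN_form k hk (e v) h0' h1'
  have hcn := cn_invariant k hk e he v
  have hcnv : cn k v = k - j := by
    rcases hv with h | h <;> rw [h]
    · exact cn_type0 k hk j hj1 hj2
    · exact cn_type2 k hk j hj1 hj2
  have hcnv' : cn k (e v) = k - j' := by
    rcases hv' with h | h <;> rw [h]
    · exact cn_type0 k hk j' hj1' hj2'
    · exact cn_type2 k hk j' hj1' hj2'
  have hjj : j = j' := by omega
  subst hjj
  rcases hv with h | h <;> rcases hv' with h' | h'
  · left; rw [h', h]
  · right; rw [h', h]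
  · right; rw [h', h, neg_neg]
  · left; rw [h', h]

lemma dichotomy (hk : 2 ≤ k) (e : andrasfai k ≃g andrasfai k) (he : e 0 = 0) :
    (∀ j, 1 ≤ j → j ≤ k - 1 →
      e (((3 * j : ℕ) : ZMod (3 * k - 1))) = ((3 * j : ℕ) : ZMod (3 * k - 1)) ∧
      e (-((3 * j : ℕ) : ZMod (3 * k - 1))) = -((3 * j : ℕ) : ZMod (3 * k - 1))) ∨
    (∀ j, 1 ≤ j → j ≤ k - 1 →
      e (((3 * j : ℕ) : ZMod (3 * k - 1))) = -((3 * j : ℕ) : ZMod (3 * k - 1)) ∧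
      e (-((3 * j : ℕ) : ZMod (3 * k - 1))) = ((3 * j : ℕ) : ZMod (3 * k - 1))) := by
  haveI := nz k hk
  set K := k - 1 with hK
  have hK1 : 1 ≤ K := by omega
  have hKk : K ≤ k - 1 := le_refl _
  have castne : ∀ j, 1 ≤ j → j ≤ k - 1 → ((3 * j : ℕ) : ZMod (3 * k - 1)) ≠ 0 := by
    intro j hj1 hj2 h
    have := cast_val k hk (3 * j) (by omega)
    rw [h, ZMod.val_zero] at this
    omega
  have castmod : ∀ j, 1 ≤ j → j ≤ k - 1 → ((3 * j : ℕ) : ZMod (3 * k - 1)).val % 3 ≠ 1 := by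
    intro j hj1 hj2
    rw [cast_val k hk _ (by omega)]
    omega
  have negne : ∀ j, 1 ≤ j → j ≤ k - 1 → (-((3 * j : ℕ) : ZMod (3 * k - 1))) ≠ 0 := by
    intro j hj1 hj2 h
    rw [neg_eq_zero] at h
    exact castne j hj1 hj2 h
  have negmod : ∀ j, 1 ≤ j → j ≤ k - 1 →
      (-((3 * j : ℕ) : ZMod (3 * k - 1))).val % 3 ≠ 1 := by
    intro j hj1 hj2
    rw [neg_cast_val k hk _ (by omega) (by omega)]
    omega
  by_cases hp : e (((3 * K : ℕ) : ZMod (3 * k - 1))) = ((3 * K : ℕ) : ZMod (3 * k - 1))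
  · left
    intro j hj1 hj2
    have hfix : e (((3 * j : ℕ) : ZMod (3 * k - 1))) = ((3 * j : ℕ) : ZMod (3 * k - 1)) := by
      rcases e_pm k hk e he _ (castne j hj1 hj2) (castmod j hj1 hj2) with h | h
      · exact h
      · -- e (3j) = -(3j); derive contradiction
        exfalso
        by_cases hjK : j = K
        · rw [hjK] at h
          rw [hp] at h
          exact ne_neg k hk K hK1 hKk h
        · have hnadj := not_adj_aa k hk j K hj1 hj2 hK1 hKk
          have := e.map_rel_iff (a := ((3 * j : ℕ) : ZMod (3 * k - 1)))
            (b := ((3 * K : ℕ) : ZMod (3 * k - 1)))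
          rw [h, hp] at this
          apply hnadj
          rw [← this]
          rw [SimpleGraph.adj_comm, adj_ab k hk j K hj1 hj2 hK1 hKk]
          omega
    refine ⟨hfix, ?_⟩
    rcases e_pm k hk e he _ (negne j hj1 hj2) (negmod j hj1 hj2) with h | h
    · exact h
    · exfalso
      rw [neg_neg] at h
      have h2 : e (-((3 * j : ℕ) : ZMod (3 * k - 1))) =
          e (((3 * j : ℕ) : ZMod (3 * k - 1))) := by rw [h, hfix]
      have h3 := e.injective h2
      exact ne_neg k hk j hj1 hj2 h3.symm
  · right
    have hpK : e (((3 * K : ℕ) : ZMod (3 * k - 1))) = -((3 * K : ℕ) : ZMod (3 * k - 1)) := by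
      rcases e_pm k hk e he _ (castne K hK1 hKk) (castmod K hK1 hKk) with h | h
      · exact absurd h hp
      · exact h
    intro j hj1 hj2
    have hflip : e (((3 * j : ℕ) : ZMod (3 * k - 1))) = -((3 * j : ℕ) : ZMod (3 * k - 1)) := by
      rcases e_pm k hk e he _ (castne j hj1 hj2) (castmod j hj1 hj2) with h | h
      · exfalso
        by_cases hjK : j = K
        · rw [hjK] at h
          rw [h] at hp
          exact hp rfl
        · have hnadj := not_adj_aa k hk j K hj1 hj2 hK1 hKk
          have := e.map_rel_iff (a := ((3 * j : ℕ) : ZMod (3 * k - 1)))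
            (b := ((3 * K : ℕ) : ZMod (3 * k - 1)))
          rw [h, hpK] at this
          apply hnadj
          rw [← this, adj_ab k hk K j hK1 hKk hj1 hj2]
          omega
      · exact h
    refine ⟨hflip, ?_⟩
    rcases e_pm k hk e he _ (negne j hj1 hj2) (negmod j hj1 hj2) with h | h
    · exfalso
      have h2 : e (-((3 * j : ℕ) : ZMod (3 * k - 1))) =
          e (((3 * j : ℕ) : ZMod (3 * k - 1))) := by rw [h, hflip]
      have h3 := e.injective h2
      exact ne_neg k hk j hj1 hj2 h3.symm
    · rw [neg_neg] at h
      exact h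

lemma mono (hk : 2 ≤ k) (e : andrasfai k ≃g andrasfai k) (he : e 0 = 0)
    (hNN : ∀ v : ZMod (3 * k - 1), v ≠ 0 → v.val % 3 ≠ 1 → e v = v) :
    ∀ t t', t < k → t' < k →
      e (((3 * t + 1 : ℕ) : ZMod (3 * k - 1))) = ((3 * t' + 1 : ℕ) : ZMod (3 * k - 1)) →
      t' ≤ t := by
  haveI := nz k hk
  intro t t' ht ht' hee
  by_contra hlt
  push_neg at hlt
  -- t < t'
  set w : ZMod (3 * k - 1) := ((3 * t + 2 : ℕ) : ZMod (3 * k - 1)) with hw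
  have hwval : w.val = 3 * t + 2 := cast_val k hk _ (by omega)
  have hw0 : w ≠ 0 := fun h => by rw [h, ZMod.val_zero] at hwval; omega
  have hwm : w.val % 3 ≠ 1 := by omega
  have hew : e w = w := hNN w hw0 hwm
  have hadj : (andrasfai k).Adj (((3 * t + 1 : ℕ) : ZMod (3 * k - 1))) w := by
    rw [adj_iff k hk, sub_val k hk, hwval, cast_val k hk _ (by omega)]
    split_ifs <;> omega
  have hnadj : ¬ (andrasfai k).Adj (((3 * t' + 1 : ℕ) : ZMod (3 * k - 1))) w := by
    rw [adj_iff k hk, sub_val k hk, hwval, cast_val k hk _ (by omega)]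
    split_ifs <;> omega
  have := e.map_rel_iff (a := ((3 * t + 1 : ℕ) : ZMod (3 * k - 1))) (b := w)
  rw [hee, hew] at this
  exact hnadj (this.mpr hadj)

lemma fix_of_fixNN (hk : 2 ≤ k) (e : andrasfai k ≃g andrasfai k) (he : e 0 = 0)
    (hNN : ∀ v : ZMod (3 * k - 1), v ≠ 0 → v.val % 3 ≠ 1 → e v = v) :
    ∀ x, e x = x := by
  haveI := nz k hk
  intro x
  by_cases h0 : x = 0
  · rw [h0]; exact he
  by_cases h1 : x.val % 3 = 1
  · -- x = 3t+1
    have hx := ZMod.val_lt x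
    have hxf : x = ((3 * ((x.val - 1) / 3) + 1 : ℕ) : ZMod (3 * k - 1)) := by
      rw [eq_cast_iff k hk _ _ (by omega)]; omega
    set t := (x.val - 1) / 3 with htdef
    have ht : t < k := by omega
    have hex0 : e x ≠ 0 := fun h => h0 ((e_zero_iff k e he x).mp h)
    have hex1 : (e x).val % 3 = 1 := (e_class1 k hk e he x).mpr h1
    have hex := ZMod.val_lt (e x)
    have hexf : e x = ((3 * (((e x).val - 1) / 3) + 1 : ℕ) : ZMod (3 * k - 1)) := by
      rw [eq_cast_iff k hk _ _ (by omega)]; omega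
    set t' := ((e x).val - 1) / 3 with ht'def
    have ht' : t' < k := by omega
    have h1' : t' ≤ t := by
      apply mono k hk e he hNN t t' ht ht'
      rw [← hxf, ← hexf]
    have hsym0 : e.symm 0 = 0 := symm_zero k e he
    have hsymNN : ∀ v : ZMod (3 * k - 1), v ≠ 0 → v.val % 3 ≠ 1 → e.symm v = v := by
      intro v hv0 hv1
      have := hNN v hv0 hv1
      rw [← this]
      nth_rewrite 2 [this]
      exact e.symm_apply_apply v
    have hsymm_eq : e.symm (((3 * t' + 1 : ℕ) : ZMod (3 * k - 1))) =
        ((3 * t + 1 : ℕ) : ZMod (3 * k - 1)) := by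
      rw [← hexf, ← hxf]
      exact e.symm_apply_apply x
    have h2' : t ≤ t' := mono k hk e.symm hsym0 hsymNN t' t ht' ht hsymm_eq
    have htt : t = t' := le_antisymm h2' h1'
    rw [hexf, hxf, htt]
  · exact hNN x h0 h1

lemma key (hk : 2 ≤ k) (e : andrasfai k ≃g andrasfai k) (he : e 0 = 0) : (∀ x, e x = x) ∨ (∀ x, e x = -x) := by
  haveI := nz k hk
  rcases dichotomy k hk e he with hd | hd
  · left
    apply fix_of_fixNN k hk e he
    intro v hv0 hv1
    obtain ⟨j, hj1, hj2, hv⟩ := NN_form k hk v hv0 hv1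
    rcases hv with h | h <;> rw [h]
    · exact (hd j hj1 hj2).1
    · exact (hd j hj1 hj2).2
  · right
    set ν : andrasfai k ≃g andrasfai k := phi k hk 0 true with hν
    have hνapp : ∀ x, ν x = -x := by
      intro x; rw [hν, phi_apply]; simp
    set e' := e.trans ν with he'
    have he'app : ∀ x, e' x = -(e x) := by
      intro x
      rw [he']
      show ν (e x) = -(e x)
      exact hνapp (e x)
    have he'0 : e' 0 = 0 := by rw [he'app, he, neg_zero]
    have hfix : ∀ x, e' x = x := by
      apply fix_of_fixNN k hk e' he'0
      intro v hv0 hv1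
      obtain ⟨j, hj1, hj2, hv⟩ := NN_form k hk v hv0 hv1
      rcases hv with h | h <;> rw [h, he'app]
      · rw [(hd j hj1 hj2).1, neg_neg]
      · rw [(hd j hj1 hj2).2]
    intro x
    have hx := hfix x
    rw [he'app] at hx
    exact neg_eq_iff_eq_neg.mp hx

end KeyLemma

end AndrasfaiAux

open AndrasfaiAux in
theorem andrasfai_card_aut (k : ℕ) (hk : 2 ≤ k) :
    Nat.card (andrasfai k ≃g andrasfai k) = 2 * (3 * k - 1) := by
  haveI := nz k hk
  have hbij : Function.Bijective (fun p : ZMod (3 * k - 1) × Bool => phi k hk p.1 p.2) := by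
    constructor
    · rintro ⟨b, s⟩ ⟨b', s'⟩ h
      have h0 := DFunLike.congr_fun h (0 : ZMod (3 * k - 1))
      rw [phi_apply, phi_apply] at h0
      simp only at h0
      have hb : b = b' := by
        cases s <;> cases s' <;> simpa using h0
      subst hb
      have h1 := DFunLike.congr_fun h ((1 : ℕ) : ZMod (3 * k - 1))
      rw [phi_apply, phi_apply] at h1
      have hone : ((1 : ℕ) : ZMod (3 * k - 1)) ≠ -((1 : ℕ) : ZMod (3 * k - 1)) := by
        intro hcon
        have hv1 := cast_val k hk 1 (by omega)
        have hv2 := neg_cast_val k hk 1 (by omega) (by omega)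
        rw [← hcon, hv1] at hv2
        omega
      cases s <;> cases s' <;> simp only [Bool.cond_true, Bool.cond_false] at h1
      · rfl
      · exact absurd (add_right_cancel h1) hone
      · exact absurd (add_right_cancel h1).symm hone
      · rfl
    · intro σ
      set b := σ 0 with hb
      set e := σ.trans (phi k hk (-b) false) with he
      have heapp : ∀ x, e x = σ x - b := by
        intro x
        rw [he]
        show phi k hk (-b) false (σ x) = σ x - b
        rw [phi_apply]
        simp [sub_eq_add_neg]
      have he0 : e 0 = 0 := by rw [heapp, ← hb, sub_self]
      rcases key k hk e he0 with hid | hneg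
      · refine ⟨(b, false), ?_⟩
        apply RelIso.ext
        intro x
        show phi k hk b false x = σ x
        rw [phi_apply]
        have hx := hid x
        rw [heapp] at hx
        simp only [Bool.cond_false]
        linear_combination -hx
      · refine ⟨(b, true), ?_⟩
        apply RelIso.ext
        intro x
        show phi k hk b true x = σ x
        rw [phi_apply]
        have hx := hneg x
        rw [heapp] at hx
        simp only [Bool.cond_true]
        linear_combination -hx
  have hcard := Nat.card_eq_of_bijective _ hbij
  rw [← hcard, Nat.card_prod, Nat.card_zmod, Nat.card_eq_fintype_card, Fintype.card_bool]
  omega
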